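/- Let f be a probability density on R^d. Suppose f_{R,W}(r,w) = r^{d-1}·2^{-d}·exp(-r)·c(F_L(rw₁),...,F_L(rw_d)) is the L^1 angular-radial density on Laplace margins, and suppose f_{R,W}(r,w) ~ 2^{-d}·r^{d-1}·M(e^{-r}, w)·exp(-r·λ(w)) as r → ∞, with M(t,w) slowly varying in t at 0⁺, λ(w) > 0 continuous, f_{R,W} continuous, bounded, and ultimately monotone in r for each w. Then for each w on the L^1 unit sphere, the conditional radial survivor function satisfies F̄_{R|W}(μ+r | w)/F̄_{R|W}(μ | w) → exp(-r·λ(w)) as μ → ∞, for all r > 0; i.e., the conditional radial tail is in the Gumbel domain of attraction with GP shape 0 and scale 1/λ(w). -/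

import Mathlib

open MeasureTheory Filter Set

/-- `L` is slowly varying at `0⁺`. -/
def SlowlyVaryingAtZero (L : ℝ → ℝ) : Prop :=
  ∀ c : ℝ, 0 < c →
    Filter.Tendsto (fun x => L (c * x) / L x) (nhdsWithin 0 (Set.Ioi 0)) (nhds 1)

/-- The standard Laplace cdf. -/
noncomputable def laplaceCdf (x : ℝ) : ℝ :=
  if x < 0 then Real.exp x / 2 else 1 - Real.exp (-x) / 2

/-- SPAR on Laplace margins: if the `L¹` angular-radial density
`f_{R,W}(r,w) = r^{d-1}·2^{-d}·e^{-r}·c(F_L(rw₁),...,F_L(rw_d))` satisfies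
`f_{R,W}(r,w) ~ 2^{-d} r^{d-1} M(e^{-r},w) exp(-r λ(w))` as `r → ∞` (with `M(·,w)` slowly
varying at `0⁺` and `λ` positive and continuous), is continuous, bounded, nonnegative and
ultimately monotone in `r`, then for each `w` on the `L¹` unit sphere the conditional radial
tail satisfies `F̄(μ+r|w)/F̄(μ|w) → exp(-r λ(w))` as `μ → ∞`, i.e. GP shape `0` and scale
`1/λ(w)`. -/
theorem stmt17 (d : ℕ) (hd : 0 < d)
    (fRW : ℝ → (Fin d → ℝ) → ℝ) (c : (Fin d → ℝ) → ℝ)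
    (lam : (Fin d → ℝ) → ℝ) (M : ℝ → (Fin d → ℝ) → ℝ)
    (hdef : ∀ r : ℝ, 0 ≤ r → ∀ w : Fin d → ℝ, (∑ i, |w i|) = 1 →
      fRW r w = r ^ (d - 1) * 2 ^ (-(d : ℝ)) * Real.exp (-r) *
        c (fun i => laplaceCdf (r * w i)))
    (hlamc : Continuous lam)
    (hlampos : ∀ w : Fin d → ℝ, (∑ i, |w i|) = 1 → 0 < lam w)
    (hM : ∀ w : Fin d → ℝ, (∑ i, |w i|) = 1 →
      SlowlyVaryingAtZero (fun t => M t w) ∧ ∀ t : ℝ, 0 < t → 0 < M t w)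
    (hasymp : ∀ w : Fin d → ℝ, (∑ i, |w i|) = 1 →
      Filter.Tendsto (fun r : ℝ => fRW r w /
          (2 ^ (-(d : ℝ)) * r ^ (d - 1) * M (Real.exp (-r)) w * Real.exp (-r * lam w)))
        Filter.atTop (nhds 1))
    (hcont : Continuous (fun p : ℝ × (Fin d → ℝ) => fRW p.1 p.2))
    (hbdd : ∃ B : ℝ, ∀ (r : ℝ) (w : Fin d → ℝ), |fRW r w| ≤ B)
    (hnn : ∀ (r : ℝ) (w : Fin d → ℝ), 0 ≤ fRW r w)
    (hmono : ∀ w : Fin d → ℝ, (∑ i, |w i|) = 1 → ∃ r₀ : ℝ,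
      AntitoneOn (fun r => fRW r w) (Set.Ici r₀) ∨ MonotoneOn (fun r => fRW r w) (Set.Ici r₀)) :
    ∀ w : Fin d → ℝ, (∑ i, |w i|) = 1 → ∀ r : ℝ, 0 < r →
      Filter.Tendsto (fun μ : ℝ =>
          (∫ s in Set.Ioi (μ + r), fRW s w) / (∫ s in Set.Ioi μ, fRW s w))
        Filter.atTop (nhds (Real.exp (-r * lam w))) := by
  intro w hw r hr
  have hgh := hasymp w hw
  set lw : ℝ := lam w with hlw
  set g : ℝ → ℝ := fun s => fRW s w with hgdef
  set h : ℝ → ℝ := fun s =>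
    2 ^ (-(d : ℝ)) * s ^ (d - 1) * M (Real.exp (-s)) w * Real.exp (-s * lw) with hhdef
  have hlpos : 0 < lw := hlampos w hw
  have hgh' : Tendsto (fun s => g s / h s) atTop (nhds 1) := hgh
  have hgc : Continuous g := hcont.comp (continuous_id.prodMk continuous_const)
  have hgnn : ∀ s, 0 ≤ g s := fun s => hnn s w
  have hhpos : ∀ s : ℝ, 0 < s → 0 < h s := by
    intro s hs
    have h1 : (0:ℝ) < 2 ^ (-(d:ℝ)) := Real.rpow_pos_of_pos two_pos _
    have h2 : (0:ℝ) < s ^ (d-1) := pow_pos hs _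
    have h3 : 0 < M (Real.exp (-s)) w := (hM w hw).2 _ (Real.exp_pos _)
    have h4 : (0:ℝ) < Real.exp (-s * lw) := Real.exp_pos _
    exact mul_pos (mul_pos (mul_pos h1 h2) h3) h4
  have hgpos : ∀ᶠ s in atTop, 0 < g s := by
    filter_upwards [hgh.eventually (eventually_gt_nhds (by norm_num : (1:ℝ)/2 < 1)),
      eventually_gt_atTop (0:ℝ)] with s h1 h2
    have hhp := hhpos s h2
    have : g s = (g s / h s) * h s := (div_mul_cancel₀ _ hhp.ne').symm
    rw [this]
    exact mul_pos (lt_trans (by norm_num) h1) hhp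
  -- Step 1: ratio lemma
  have ratio : ∀ t : ℝ,
      Tendsto (fun μ => g (μ + t) / g μ) atTop (nhds (Real.exp (-t * lw))) := by
    intro t
    have hexp : Tendsto (fun μ : ℝ => Real.exp (-μ)) atTop (nhdsWithin 0 (Ioi 0)) := by
      apply tendsto_nhdsWithin_of_tendsto_nhds_of_eventually_within
      · exact Real.tendsto_exp_atBot.comp tendsto_neg_atTop_atBot
      · exact Eventually.of_forall (fun μ => Real.exp_pos _)
    have hM1 : Tendsto (fun μ : ℝ =>
        M (Real.exp (-t) * Real.exp (-μ)) w / M (Real.exp (-μ)) w) atTop (nhds 1) :=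
      ((hM w hw).1 (Real.exp (-t)) (Real.exp_pos _)).comp hexp
    have hA : Tendsto (fun μ : ℝ => ((μ + t) / μ) ^ (d-1)) atTop (nhds 1) := by
      have h0 : Tendsto (fun μ : ℝ => (μ + t)/μ) atTop (nhds 1) := by
        have h1 : Tendsto (fun μ : ℝ => 1 + t/μ) atTop (nhds 1) := by
          simpa using tendsto_const_nhds.add (tendsto_const_nhds.div_atTop tendsto_id :
            Tendsto (fun μ : ℝ => t / μ) atTop (nhds 0))
        apply h1.congr'
        filter_upwards [eventually_ne_atTop (0:ℝ)] with μ hμ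
        field_simp
      simpa using h0.pow (d-1)
    have hhr : Tendsto (fun μ : ℝ => h (μ + t) / h μ) atTop (nhds (Real.exp (-t * lw))) := by
      have hcomb := (hA.mul hM1).mul_const (Real.exp (-t * lw))
      rw [one_mul, one_mul] at hcomb
      apply hcomb.congr'
      filter_upwards [eventually_gt_atTop (max 0 (-t))] with μ hμ
      have hμ0 : 0 < μ := lt_of_le_of_lt (le_max_left _ _) hμ
      have hμt : 0 < μ + t := by
        have := lt_of_le_of_lt (le_max_right _ _) hμ; linarith
      have hMp : 0 < M (Real.exp (-μ)) w := (hM w hw).2 _ (Real.exp_pos _)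
      have E1 : Real.exp (-(μ+t)) = Real.exp (-t) * Real.exp (-μ) := by
        rw [← Real.exp_add]; ring_nf
      have E2 : Real.exp (-(μ+t) * lw) = Real.exp (-t * lw) * Real.exp (-μ * lw) := by
        rw [← Real.exp_add]; ring_nf
      simp only [hhdef]
      rw [E1, E2]
      have h2 : (2:ℝ) ^ (-(d:ℝ)) ≠ 0 := (Real.rpow_pos_of_pos two_pos _).ne'
      have h3 : μ ^ (d-1) ≠ 0 := (pow_pos hμ0 _).ne'
      have h4 : Real.exp (-μ * lw) ≠ 0 := (Real.exp_pos _).ne'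
      field_simp
      rw [div_pow, mul_right_comm, div_mul_cancel₀ _ h3, mul_comm]
    have h1 : Tendsto (fun μ : ℝ => g (μ+t)/h (μ+t)) atTop (nhds 1) :=
      hgh'.comp (tendsto_atTop_add_const_right atTop t tendsto_id)
    have key := (h1.mul hhr).mul (hgh'.inv₀ one_ne_zero)
    have hval : (1 * Real.exp (-t * lw)) * (1:ℝ)⁻¹ = Real.exp (-t * lw) := by norm_num
    rw [hval] at key
    apply key.congr'
    filter_upwards [eventually_gt_atTop (max 0 (-t))] with μ hμ
    have hμ0 : 0 < μ := lt_of_le_of_lt (le_max_left _ _) hμ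
    have hμt : 0 < μ + t := by
      have := lt_of_le_of_lt (le_max_right _ _) hμ; linarith
    have hhμ : h μ ≠ 0 := (hhpos μ hμ0).ne'
    have hhμt : h (μ+t) ≠ 0 := (hhpos _ hμt).ne'
    show g (μ+t) / h (μ+t) * (h (μ+t) / h μ) * (g μ / h μ)⁻¹ = g (μ+t) / g μ
    rcases eq_or_ne (g μ) 0 with h0 | h0
    · simp [h0]
    · rw [inv_div]
      field_simp
      try ring
  -- Step 2: find μ₀ with positivity, geometric step, and antitonicity
  set q : ℝ := Real.exp (-(lw/2)) with hq
  have hq0 : 0 < q := Real.exp_pos _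
  have hq1 : q < 1 := by
    rw [hq]
    apply Real.exp_lt_one_iff.mpr ; linarith
  have hstep : ∀ᶠ μ in atTop, 0 < g μ ∧ g (μ + 1) ≤ q * g μ := by
    have h1 : Real.exp (-1 * lw) < q := by
      rw [hq]; apply Real.exp_lt_exp.mpr; linarith
    filter_upwards [(ratio 1).eventually (eventually_lt_nhds h1), hgpos] with μ hlt hpos
    exact ⟨hpos, le_of_lt ((div_lt_iff₀ hpos).mp hlt)⟩
  obtain ⟨μ₁, hμ₁⟩ := eventually_atTop.mp hstep
  obtain ⟨r₀, hmw⟩ := hmono w hw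
  set μ₀ : ℝ := max μ₁ r₀ with hμ₀def
  have hμ₀step : ∀ μ, μ₀ ≤ μ → 0 < g μ ∧ g (μ+1) ≤ q * g μ :=
    fun μ hμ => hμ₁ μ (le_trans (le_max_left _ _) hμ)
  have hμ₀anti : AntitoneOn g (Ici μ₀) := by
    rcases hmw with hA | hMo
    · exact hA.mono (Ici_subset_Ici.mpr (le_max_right _ _))
    · exfalso
      have h1 : μ₀ ∈ Ici r₀ := mem_Ici.mpr (le_max_right _ _)
      have h2 : μ₀ + 1 ∈ Ici r₀ := by
        simp only [mem_Ici] at h1 ⊢; linarith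
      have h3 := hMo h1 h2 (by linarith)
      obtain ⟨hpos, hle⟩ := hμ₀step μ₀ le_rfl
      have : q * g μ₀ < g μ₀ := by nlinarith
      simp only [hgdef] at h3
      nlinarith [h3]
  -- Step 3: geometric decay
  have hiter : ∀ n : ℕ, ∀ μ, μ₀ ≤ μ → g (μ + n) ≤ q ^ n * g μ := by
    intro n
    induction n with
    | zero => intro μ hμ; simp
    | succ n ih =>
      intro μ hμ
      have h1 : g ((μ+1) + n) ≤ q ^ n * g (μ+1) := ih (μ+1) (by linarith)
      have h2 : g (μ+1) ≤ q * g μ := (hμ₀step μ hμ).2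
      have heq : g (μ + ((n:ℝ)+1)) = g ((μ+1)+(n:ℝ)) := by ring_nf
      calc g (μ + ((n:ℕ)+1:ℕ)) = g ((μ+1)+(n:ℝ)) := by push_cast; exact heq
        _ ≤ q ^ n * g (μ+1) := h1
        _ ≤ q ^ n * (q * g μ) := mul_le_mul_of_nonneg_left h2 (pow_nonneg hq0.le n)
        _ = q ^ (n+1) * g μ := by ring
  have hdecay : ∀ μ, μ₀ ≤ μ → ∀ t : ℝ, 0 < t →
      g (μ + t) ≤ g μ * (q⁻¹ * Real.exp (-(lw/2) * t)) := by
    intro μ hμ t ht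
    set n := ⌊t⌋₊ with hn
    have hnt : (n:ℝ) ≤ t := Nat.floor_le ht.le
    have htn : t < (n:ℝ) + 1 := Nat.lt_floor_add_one t
    have h1 : g (μ + t) ≤ g (μ + n) := by
      apply hμ₀anti
      · simp only [mem_Ici]
        have : (0:ℝ) ≤ (n:ℝ) := Nat.cast_nonneg n
        linarith
      · simp only [mem_Ici]; linarith
      · linarith
    have h2 : g (μ + n) ≤ q ^ n * g μ := hiter n μ hμ
    have h3 : q ^ n ≤ q⁻¹ * Real.exp (-(lw/2) * t) := by
      have e1 : q ^ n = Real.exp ((n:ℝ) * (-(lw/2))) := by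
        rw [Real.exp_nat_mul]
      have e2 : q⁻¹ * Real.exp (-(lw/2) * t) = Real.exp (lw/2 + -(lw/2) * t) := by
        rw [Real.exp_add, hq, ← Real.exp_neg]; ring_nf
      rw [e1, e2]
      apply Real.exp_le_exp.mpr
      nlinarith
    calc g (μ + t) ≤ g (μ + n) := h1
      _ ≤ q ^ n * g μ := h2
      _ ≤ (q⁻¹ * Real.exp (-(lw/2) * t)) * g μ :=
          mul_le_mul_of_nonneg_right h3 (hgnn μ)
      _ = g μ * (q⁻¹ * Real.exp (-(lw/2) * t)) := by ring
  -- Step 4: shift identity and Karamata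
  have hshift : ∀ μ : ℝ, ∫ s in Ioi μ, g s = ∫ t in Ioi (0:ℝ), g (μ + t) := by
    intro μ
    have h := (measurePreserving_add_left volume μ).setIntegral_preimage_emb
      (MeasurableEquiv.addLeft μ).measurableEmbedding g (Ioi μ)
    rw [← h]
    congr 1
    ext x; simp [lt_add_iff_pos_right]
  have hval : ∫ t in Ioi (0:ℝ), Real.exp (-t * lw) = 1 / lw := by
    have key : ∫ t in Ioi (0:ℝ), Real.exp (-t * lw)
        = 0 - (-Real.exp (-(0:ℝ) * lw) / lw) := by
      refine integral_Ioi_of_hasDerivAt_of_tendsto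
        (f := fun x : ℝ => -Real.exp (-x * lw) / lw) ?_ (fun x _ => ?_) ?_ ?_
      · exact (((Real.continuous_exp.comp
          (continuous_neg.mul continuous_const)).neg.div_const lw)).continuousWithinAt
      · have h1 : HasDerivAt (fun x : ℝ => -x * lw) (-lw) x := by
          simpa using ((hasDerivAt_id x).neg.mul_const lw)
        have h2 := (Real.hasDerivAt_exp (-x * lw)).comp x h1
        have h3 := (h2.neg).div_const lw
        exact h3.congr_deriv (by field_simp)
      · exact (exp_neg_integrableOn_Ioi 0 hlpos).congr_fun
          (fun x _ => by ring_nf) measurableSet_Ioi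
      · have h4 : Tendsto (fun x : ℝ => -x * lw) atTop atBot :=
          Tendsto.atBot_mul_const hlpos tendsto_neg_atTop_atBot
        have h5 : Tendsto (fun x : ℝ => Real.exp (-x * lw)) atTop (nhds 0) :=
          Real.tendsto_exp_atBot.comp h4
        simpa [neg_div] using ((h5.div_const lw).neg)
    rw [key]; simp; field_simp
  have hDCT : Tendsto (fun μ => ∫ t in Ioi (0:ℝ), g (μ + t) / g μ) atTop
      (nhds (∫ t in Ioi (0:ℝ), Real.exp (-t * lw))) := by
    apply tendsto_integral_filter_of_dominated_convergence
      (bound := fun t => q⁻¹ * Real.exp (-(lw/2) * t))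
    · apply Eventually.of_forall; intro μ
      exact ((hgc.comp (continuous_const.add continuous_id)).div_const
        _).aestronglyMeasurable.restrict
    · filter_upwards [eventually_ge_atTop μ₀] with μ hμ
      rw [ae_restrict_iff' measurableSet_Ioi]
      apply ae_of_all
      intro t ht
      have hgt := (hμ₀step μ hμ).1
      rw [Real.norm_eq_abs, abs_of_nonneg (div_nonneg (hgnn _) hgt.le)]
      rw [div_le_iff₀ hgt]
      calc g (μ + t) ≤ g μ * (q⁻¹ * Real.exp (-(lw/2) * t)) := hdecay μ hμ t ht
        _ = q⁻¹ * Real.exp (-(lw/2) * t) * g μ := by ring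
    · exact (exp_neg_integrableOn_Ioi 0 (by linarith : (0:ℝ) < lw/2)).const_mul _
    · exact ae_of_all _ (fun t => ratio t)
  rw [hval] at hDCT
  have hKar : Tendsto (fun μ => (∫ s in Ioi μ, g s) / g μ) atTop (nhds (1/lw)) := by
    apply hDCT.congr'
    apply Eventually.of_forall
    intro μ
    show (∫ t in Ioi (0:ℝ), g (μ + t) / g μ) = (∫ s in Ioi μ, g s) / g μ
    rw [integral_div, ← hshift μ]
  have hKar' : Tendsto (fun μ => (∫ s in Ioi (μ + r), g s) / g (μ + r)) atTop
      (nhds (1/lw)) := hKar.comp (tendsto_atTop_add_const_right atTop r tendsto_id)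
  have main := (hKar'.mul (ratio r)).mul (hKar.inv₀ (one_div_ne_zero hlpos.ne'))
  have hlim : (1/lw * Real.exp (-r*lw)) * ((1:ℝ)/lw)⁻¹ = Real.exp (-r*lw) := by
    field_simp
  rw [hlim] at main
  apply main.congr'
  filter_upwards [eventually_ge_atTop μ₀] with μ hμ
  have hg1 : g μ ≠ 0 := (hμ₀step μ hμ).1.ne'
  have hg2 : g (μ + r) ≠ 0 := (hμ₀step (μ+r) (by linarith)).1.ne'
  show (∫ s in Ioi (μ+r), g s) / g (μ+r) * (g (μ+r) / g μ) *
      ((∫ s in Ioi μ, g s) / g μ)⁻¹ = (∫ s in Ioi (μ+r), g s) / (∫ s in Ioi μ, g s)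
  rcases eq_or_ne (∫ s in Ioi μ, g s) 0 with hI | hI
  · simp [hI]
  · rw [inv_div]
    field_simp
    try ring
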